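/- Block-truncated moments expand into connected partitions: for pairwise disjoint finite sets J_1, …, J_m ⊆ ℕ, ⟨J_1 ⋯ J_m⟩^{(T)} = Σ_{I ∈ P_c(J_1,…,J_m)} Π_{l=1}^k ⟨I_l⟩^T, where ⟨·⟩^{(T)} denotes the truncation in which each J_l is treated as a single object, and P_c(J_1,…,J_m) is the set of partitions of ⋃_l J_l that are connected with respect to the blocks J_1, …, J_m. -/

import Mathlib

open scoped BigOperators

/-- The finset of all partitions of a finite set `J`. -/
def partitionsOf {α : Type*} [DecidableEq α] (J : Finset α) : Finset (Finset (Finset α)) :=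
  J.powerset.powerset.filter
    (fun P => ∅ ∉ P ∧ (∀ a ∈ P, ∀ b ∈ P, a ≠ b → a ∩ b = ∅) ∧ P.biUnion id = J)

namespace BT

lemma mem_partitionsOf {α : Type*} [DecidableEq α] {S : Finset α} {P : Finset (Finset α)} :
    P ∈ partitionsOf S ↔
      ∅ ∉ P ∧ (∀ a ∈ P, ∀ b ∈ P, a ≠ b → a ∩ b = ∅) ∧ P.biUnion id = S := by
  unfold partitionsOf
  simp only [Finset.mem_filter, Finset.mem_powerset, and_iff_right_iff_imp]
  rintro ⟨-, -, hu⟩ b hb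
  rw [Finset.mem_powerset, ← hu]
  exact Finset.subset_biUnion_of_mem id hb

variable {mm : ℕ} {J : Fin mm → Finset ℕ}

lemma uniqLabel (hdisj : ∀ l l', l ≠ l' → J l ∩ J l' = ∅) {x : ℕ} {l l' : Fin mm}
    (h : x ∈ J l) (h' : x ∈ J l') : l = l' := by
  by_contra hne
  have := hdisj l l' hne
  have hx : x ∈ J l ∩ J l' := Finset.mem_inter.mpr ⟨h, h'⟩
  rw [this] at hx
  exact absurd hx (Finset.notMem_empty x)

lemma biUnion_inter (hdisj : ∀ l l', l ≠ l' → J l ∩ J l' = ∅) (B B' : Finset (Fin mm)) :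
    (B ∩ B').biUnion J = B.biUnion J ∩ B'.biUnion J := by
  ext x
  simp only [Finset.mem_biUnion, Finset.mem_inter]
  constructor
  · rintro ⟨l, ⟨hl, hl'⟩, hx⟩
    exact ⟨⟨l, hl, hx⟩, ⟨l, hl', hx⟩⟩
  · rintro ⟨⟨l, hl, hx⟩, ⟨l', hl', hx'⟩⟩
    exact ⟨l, ⟨hl, uniqLabel hdisj hx hx' ▸ hl'⟩, hx⟩

lemma biUnion_inj (hJne : ∀ l, (J l).Nonempty)
    (hdisj : ∀ l l', l ≠ l' → J l ∩ J l' = ∅) {B B' : Finset (Fin mm)}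
    (h : B.biUnion J = B'.biUnion J) : B = B' := by
  have key : ∀ (C C' : Finset (Fin mm)), C.biUnion J = C'.biUnion J → C ⊆ C' := by
    intro C C' hCC l hl
    obtain ⟨x, hx⟩ := hJne l
    have : x ∈ C'.biUnion J := hCC ▸ Finset.mem_biUnion.mpr ⟨l, hl, hx⟩
    obtain ⟨l', hl', hx'⟩ := Finset.mem_biUnion.mp this
    exact uniqLabel hdisj hx hx' ▸ hl'
  exact Finset.Subset.antisymm (key _ _ h) (key _ _ h.symm)

lemma mem_inf_id {s : Finset (Finset (Fin mm))} {l : Fin mm} :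
    l ∈ s.inf id ↔ ∀ B ∈ s, l ∈ B := by
  classical
  induction s using Finset.induction_on with
  | empty => simp [Finset.inf_empty, Finset.top_eq_univ]
  | insert a s ha ih => simp [Finset.inf_insert, Finset.inf_eq_inter, Finset.mem_inter, ih]

/-- `B` is closed with respect to the partition `P`. -/
def Closed (J : Fin mm → Finset ℕ) (P : Finset (Finset ℕ)) (B : Finset (Fin mm)) : Prop :=
  ∀ b ∈ P, b ⊆ B.biUnion J ∨ b ∩ B.biUnion J = ∅

instance (P : Finset (Finset ℕ)) : DecidablePred (Closed J P) := fun _ => by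
  unfold Closed; infer_instance

/-- Connected component of `l` in `A` with respect to partition `P`. -/
def comp (J : Fin mm → Finset ℕ) (P : Finset (Finset ℕ)) (A : Finset (Fin mm))
    (l : Fin mm) : Finset (Fin mm) :=
  (A.powerset.filter (fun B => Closed J P B ∧ l ∈ B)).inf id

variable {P : Finset (Finset ℕ)} {A : Finset (Fin mm)} {l l' : Fin mm}

lemma closed_A (hPA : ∀ b ∈ P, b ⊆ A.biUnion J) : Closed J P A :=
  fun b hb => Or.inl (hPA b hb)

lemma mem_comp_self (hl : l ∈ A) : l ∈ comp J P A l := by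
  rw [comp, mem_inf_id]
  intro B hB
  exact (Finset.mem_filter.mp hB).2.2

lemma comp_subset (hPA : ∀ b ∈ P, b ⊆ A.biUnion J) (hl : l ∈ A) : comp J P A l ⊆ A := by
  have hA : A ∈ A.powerset.filter (fun B => Closed J P B ∧ l ∈ B) :=
    Finset.mem_filter.mpr ⟨Finset.mem_powerset_self A, closed_A hPA, hl⟩
  exact Finset.le_iff_subset.mp (Finset.inf_le hA)

lemma comp_min {B : Finset (Fin mm)} (hB : B ⊆ A) (hcl : Closed J P B) (hl : l ∈ B) : comp J P A l ⊆ B :=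
  Finset.le_iff_subset.mp (Finset.inf_le (Finset.mem_filter.mpr ⟨Finset.mem_powerset.mpr hB, hcl, hl⟩))

lemma comp_closed (hdisj : ∀ l l', l ≠ l' → J l ∩ J l' = ∅)
    (hPA : ∀ b ∈ P, b ⊆ A.biUnion J) (hl : l ∈ A) : Closed J P (comp J P A l) := by
  intro b hb
  by_cases hd : b ∩ (comp J P A l).biUnion J = ∅
  · exact Or.inr hd
  left
  obtain ⟨x, hx⟩ := Finset.nonempty_iff_ne_empty.mpr hd
  rw [Finset.mem_inter] at hx
  have hsub : ∀ B ∈ A.powerset.filter (fun B => Closed J P B ∧ l ∈ B), b ⊆ B.biUnion J := by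
    intro B hBmem
    obtain ⟨-, hcl, -⟩ := Finset.mem_filter.mp hBmem
    rcases hcl b hb with h | h
    · exact h
    · exfalso
      obtain ⟨lx, hlx, hxJ⟩ := Finset.mem_biUnion.mp hx.2
      have hlxB : lx ∈ B := by
        have : comp J P A l ⊆ B := Finset.le_iff_subset.mp (Finset.inf_le hBmem)
        exact this hlx
      have : x ∈ b ∩ B.biUnion J := Finset.mem_inter.mpr ⟨hx.1, Finset.mem_biUnion.mpr ⟨lx, hlxB, hxJ⟩⟩
      rw [h] at this
      exact absurd this (Finset.notMem_empty x)
  intro y hy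
  obtain ⟨ly, hlyA, hyJ⟩ := Finset.mem_biUnion.mp (hPA b hb hy)
  rw [Finset.mem_biUnion]
  refine ⟨ly, ?_, hyJ⟩
  rw [comp, mem_inf_id]
  intro B hBmem
  obtain ⟨lB, hlB, hyB⟩ := Finset.mem_biUnion.mp (hsub B hBmem hy)
  exact uniqLabel hdisj hyJ hyB ▸ hlB

lemma closed_sdiff (hdisj : ∀ l l', l ≠ l' → J l ∩ J l' = ∅)
    {B B' : Finset (Fin mm)} (hB : Closed J P B) (hB' : Closed J P B') :
    Closed J P (B \ B') := by
  intro b hb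
  rcases hB b hb with h1 | h1
  · rcases hB' b hb with h2 | h2
    · right
      rw [Finset.eq_empty_iff_forall_notMem]
      intro x hx
      rw [Finset.mem_inter] at hx
      obtain ⟨lx, hlx, hxJ⟩ := Finset.mem_biUnion.mp hx.2
      rw [Finset.mem_sdiff] at hlx
      obtain ⟨lx', hlx', hxJ'⟩ := Finset.mem_biUnion.mp (h2 hx.1)
      exact hlx.2 (uniqLabel hdisj hxJ' hxJ ▸ hlx')
    · left
      intro y hy
      obtain ⟨ly, hly, hyJ⟩ := Finset.mem_biUnion.mp (h1 hy)
      rw [Finset.mem_biUnion]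
      refine ⟨ly, Finset.mem_sdiff.mpr ⟨hly, fun hmem => ?_⟩, hyJ⟩
      have : y ∈ b ∩ B'.biUnion J :=
        Finset.mem_inter.mpr ⟨hy, Finset.mem_biUnion.mpr ⟨ly, hmem, hyJ⟩⟩
      rw [h2] at this
      exact absurd this (Finset.notMem_empty y)
  · right
    rw [Finset.eq_empty_iff_forall_notMem]
    intro x hx
    rw [Finset.mem_inter] at hx
    obtain ⟨lx, hlx, hxJ⟩ := Finset.mem_biUnion.mp hx.2
    rw [Finset.mem_sdiff] at hlx
    have : x ∈ b ∩ B.biUnion J :=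
      Finset.mem_inter.mpr ⟨hx.1, Finset.mem_biUnion.mpr ⟨lx, hlx.1, hxJ⟩⟩
    rw [h1] at this
    exact absurd this (Finset.notMem_empty x)

lemma comp_symm (hdisj : ∀ l l', l ≠ l' → J l ∩ J l' = ∅)
    (hPA : ∀ b ∈ P, b ⊆ A.biUnion J) (hl : l ∈ A) (hl' : l' ∈ A)
    (h : l' ∈ comp J P A l) : l ∈ comp J P A l' := by
  by_contra hc
  have hD : Closed J P (comp J P A l \ comp J P A l') :=
    closed_sdiff hdisj (comp_closed hdisj hPA hl) (comp_closed hdisj hPA hl')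
  have hsub : comp J P A l ⊆ comp J P A l \ comp J P A l' :=
    comp_min ((Finset.sdiff_subset).trans (comp_subset hPA hl)) hD
      (Finset.mem_sdiff.mpr ⟨mem_comp_self hl, hc⟩)
  have := hsub h
  rw [Finset.mem_sdiff] at this
  exact this.2 (mem_comp_self hl')

lemma comp_eq_of_mem (hdisj : ∀ l l', l ≠ l' → J l ∩ J l' = ∅)
    (hPA : ∀ b ∈ P, b ⊆ A.biUnion J) (hl : l ∈ A) (hl' : l' ∈ A)
    (h : l' ∈ comp J P A l) : comp J P A l' = comp J P A l := by
  refine Finset.Subset.antisymm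
    (comp_min (comp_subset hPA hl) (comp_closed hdisj hPA hl) h)
    (comp_min (comp_subset hPA hl') (comp_closed hdisj hPA hl')
      (comp_symm hdisj hPA hl hl' h))



/-- The partition of `A` induced by the components of `P`. -/
def Qof (J : Fin mm → Finset ℕ) (P : Finset (Finset ℕ)) (A : Finset (Fin mm)) :
    Finset (Finset (Fin mm)) :=
  A.image (comp J P A)

/-- Connected partitions of `A.biUnion J` with respect to the blocks `J l`, `l ∈ A`. -/
def connParts (J : Fin mm → Finset ℕ) (A : Finset (Fin mm)) : Finset (Finset (Finset ℕ)) :=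
  (partitionsOf (A.biUnion J)).filter
    (fun P => ¬ ∃ S ∈ P.powerset, ∃ B ∈ A.powerset,
      S.Nonempty ∧ S ≠ P ∧ B.Nonempty ∧ B ≠ A ∧ S.biUnion id = B.biUnion J)

lemma blocks_subset (hP : P ∈ partitionsOf (A.biUnion J)) :
    ∀ b ∈ P, b ⊆ A.biUnion J := by
  intro b hb
  rw [← (mem_partitionsOf.mp hP).2.2]
  exact Finset.subset_biUnion_of_mem id hb

lemma Qof_mem_partitionsOf (hdisj : ∀ l l', l ≠ l' → J l ∩ J l' = ∅)
    (hP : P ∈ partitionsOf (A.biUnion J)) : Qof J P A ∈ partitionsOf A := by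
  have hPA := blocks_subset hP
  rw [mem_partitionsOf]
  refine ⟨?_, ?_, ?_⟩
  · intro h
    obtain ⟨l, hl, hc⟩ := Finset.mem_image.mp h
    have := mem_comp_self (P := P) (J := J) hl
    rw [hc] at this
    exact absurd this (Finset.notMem_empty l)
  · intro a ha b hb hne
    obtain ⟨la, hla, rfl⟩ := Finset.mem_image.mp ha
    obtain ⟨lb, hlb, rfl⟩ := Finset.mem_image.mp hb
    rw [Finset.eq_empty_iff_forall_notMem]
    intro x hx
    rw [Finset.mem_inter] at hx
    have hxA : x ∈ A := comp_subset hPA hla hx.1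
    have h1 := comp_eq_of_mem hdisj hPA hla hxA hx.1
    have h2 := comp_eq_of_mem hdisj hPA hlb hxA hx.2
    exact hne (h1 ▸ h2)
  · ext l
    simp only [Finset.mem_biUnion, Qof, Finset.mem_image, id]
    constructor
    · rintro ⟨B, ⟨la, hla, rfl⟩, hl⟩
      exact comp_subset hPA hla hl
    · intro hl
      exact ⟨comp J P A l, ⟨l, hl, rfl⟩, mem_comp_self hl⟩

lemma restriction_mem (hdisj : ∀ l l', l ≠ l' → J l ∩ J l' = ∅)
    (hP : P ∈ partitionsOf (A.biUnion J)) {B : Finset (Fin mm)} (hB : B ∈ Qof J P A) :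
    P.filter (· ⊆ B.biUnion J) ∈ partitionsOf (B.biUnion J) := by
  have hPA := blocks_subset hP
  obtain ⟨h0, hd, hu⟩ := mem_partitionsOf.mp hP
  obtain ⟨l0, hl0, rfl⟩ := Finset.mem_image.mp hB
  have hcl := comp_closed hdisj hPA hl0
  rw [mem_partitionsOf]
  refine ⟨fun h => h0 (Finset.mem_filter.mp h).1, ?_, ?_⟩
  · intro a ha b hb hne
    exact hd a (Finset.mem_filter.mp ha).1 b (Finset.mem_filter.mp hb).1 hne
  · ext x
    constructor
    · intro hx
      obtain ⟨b, hb, hxb⟩ := Finset.mem_biUnion.mp hx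
      exact (Finset.mem_filter.mp hb).2 hxb
    · intro hx
      have hxA : x ∈ A.biUnion J := by
        obtain ⟨l', hl', hxJ⟩ := Finset.mem_biUnion.mp hx
        exact Finset.mem_biUnion.mpr ⟨l', comp_subset hPA hl0 hl', hxJ⟩
      rw [← hu] at hxA
      obtain ⟨b, hb, hxb⟩ := Finset.mem_biUnion.mp hxA
      rw [id] at hxb
      rcases hcl b hb with hsub | hdisj'
      · exact Finset.mem_biUnion.mpr ⟨b, Finset.mem_filter.mpr ⟨hb, hsub⟩, hxb⟩
      · exfalso
        have : x ∈ b ∩ (comp J P A l0).biUnion J := Finset.mem_inter.mpr ⟨hxb, hx⟩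
        rw [hdisj'] at this
        exact absurd this (Finset.notMem_empty x)

lemma restriction_connected (hdisj : ∀ l l', l ≠ l' → J l ∩ J l' = ∅)
    (hP : P ∈ partitionsOf (A.biUnion J)) {B : Finset (Fin mm)} (hB : B ∈ Qof J P A) :
    P.filter (· ⊆ B.biUnion J) ∈ connParts J B := by
  have hPA := blocks_subset hP
  obtain ⟨h0, hd, hu⟩ := mem_partitionsOf.mp hP
  obtain ⟨l0, hl0, rfl⟩ := Finset.mem_image.mp hB
  rw [connParts, Finset.mem_filter]
  refine ⟨restriction_mem hdisj hP hB, ?_⟩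
  rintro ⟨S, hS, B', hB', hSne, hSneq, hB'ne, hB'neq, heq⟩
  rw [Finset.mem_powerset] at hS hB'
  -- B' is closed with respect to P
  have hclB' : Closed J P B' := by
    intro b hb
    by_cases hbS : b ∈ S
    · left
      rw [← heq]
      exact Finset.subset_biUnion_of_mem id hbS
    · right
      rw [Finset.eq_empty_iff_forall_notMem]
      intro x hx
      rw [Finset.mem_inter, ← heq] at hx
      obtain ⟨s, hs, hxs⟩ := Finset.mem_biUnion.mp hx.2
      rw [id] at hxs
      have hsP : s ∈ P := (Finset.mem_filter.mp (hS hs)).1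
      by_cases hbs : b = s
      · exact hbS (hbs ▸ hs)
      · have := hd b hb s hsP hbs
        have hxbs : x ∈ b ∩ s := Finset.mem_inter.mpr ⟨hx.1, hxs⟩
        rw [this] at hxbs
        exact absurd hxbs (Finset.notMem_empty x)
  obtain ⟨l1, hl1⟩ := hB'ne
  have hl1B : l1 ∈ comp J P A l0 := hB' hl1
  have hl1A : l1 ∈ A := comp_subset hPA hl0 hl1B
  have hmin : comp J P A l1 ⊆ B' :=
    comp_min (hB'.trans (comp_subset hPA hl0)) hclB' hl1
  have hEq : comp J P A l1 = comp J P A l0 := comp_eq_of_mem hdisj hPA hl0 hl1A hl1B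
  exact hB'neq (Finset.Subset.antisymm hB' (hEq ▸ hmin))


def glue {mm : ℕ} (Q : Finset (Finset (Fin mm))) (p : ∀ B ∈ Q, Finset (Finset ℕ)) :
    Finset (Finset ℕ) :=
  Q.attach.biUnion (fun B => p B.1 B.2)

variable {Q : Finset (Finset (Fin mm))} {p : ∀ B ∈ Q, Finset (Finset ℕ)}

lemma mem_glue {b : Finset ℕ} :
    b ∈ glue Q p ↔ ∃ (B : Finset (Fin mm)) (hB : B ∈ Q), b ∈ p B hB := by
  constructor
  · intro h
    obtain ⟨⟨B, hB⟩, -, hb⟩ := Finset.mem_biUnion.mp h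
    exact ⟨B, hB, hb⟩
  · rintro ⟨B, hB, hb⟩
    exact Finset.mem_biUnion.mpr ⟨⟨B, hB⟩, Finset.mem_attach _ _, hb⟩

lemma block_subset_of_mem {B : Finset (Fin mm)} {R : Finset (Finset ℕ)}
    (hR : R ∈ partitionsOf (B.biUnion J)) {b : Finset ℕ} (hb : b ∈ R) :
    b ⊆ B.biUnion J := by
  rw [← (mem_partitionsOf.mp hR).2.2]
  exact Finset.subset_biUnion_of_mem id hb

lemma cross_disjoint (hdisj : ∀ l l', l ≠ l' → J l ∩ J l' = ∅)
    (hQ : Q ∈ partitionsOf A) {B B' : Finset (Fin mm)} (hB : B ∈ Q) (hB' : B' ∈ Q)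
    (hne : B ≠ B') : B.biUnion J ∩ B'.biUnion J = ∅ := by
  rw [← biUnion_inter hdisj, (mem_partitionsOf.mp hQ).2.1 B hB B' hB' hne]
  simp

lemma glue_mem_partitionsOf (hdisj : ∀ l l', l ≠ l' → J l ∩ J l' = ∅)
    (hQ : Q ∈ partitionsOf A) (hp : ∀ B (hB : B ∈ Q), p B hB ∈ partitionsOf (B.biUnion J)) :
    glue Q p ∈ partitionsOf (A.biUnion J) := by
  obtain ⟨hQ0, hQd, hQu⟩ := mem_partitionsOf.mp hQ
  rw [mem_partitionsOf]
  refine ⟨?_, ?_, ?_⟩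
  · intro h
    obtain ⟨B, hB, h0⟩ := mem_glue.mp h
    exact (mem_partitionsOf.mp (hp B hB)).1 h0
  · intro a ha b hb hne
    obtain ⟨B, hB, ha⟩ := mem_glue.mp ha
    obtain ⟨B', hB', hb⟩ := mem_glue.mp hb
    by_cases hBB : B = B'
    · subst hBB
      exact (mem_partitionsOf.mp (hp B hB)).2.1 a ha b hb hne
    · have h1 : a ⊆ B.biUnion J := block_subset_of_mem (hp B hB) ha
      have h2 : b ⊆ B'.biUnion J := block_subset_of_mem (hp B' hB') hb
      rw [← Finset.subset_empty, ← cross_disjoint hdisj hQ hB hB' hBB]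
      exact fun x hx => Finset.mem_inter.mpr
        ⟨h1 (Finset.mem_inter.mp hx).1, h2 (Finset.mem_inter.mp hx).2⟩
  · ext x
    constructor
    · intro hx
      obtain ⟨b, hb, hxb⟩ := Finset.mem_biUnion.mp hx
      obtain ⟨B, hB, hbp⟩ := mem_glue.mp hb
      have hxB : x ∈ B.biUnion J := block_subset_of_mem (hp B hB) hbp hxb
      obtain ⟨l, hl, hxJ⟩ := Finset.mem_biUnion.mp hxB
      have hlA : l ∈ A := by
        rw [← hQu]
        exact Finset.mem_biUnion.mpr ⟨B, hB, hl⟩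
      exact Finset.mem_biUnion.mpr ⟨l, hlA, hxJ⟩
    · intro hx
      obtain ⟨l, hl, hxJ⟩ := Finset.mem_biUnion.mp hx
      rw [← hQu] at hl
      obtain ⟨B, hB, hlB⟩ := Finset.mem_biUnion.mp hl
      have hxB : x ∈ B.biUnion J := Finset.mem_biUnion.mpr ⟨l, hlB, hxJ⟩
      rw [← (mem_partitionsOf.mp (hp B hB)).2.2] at hxB
      obtain ⟨b, hb, hxb⟩ := Finset.mem_biUnion.mp hxB
      exact Finset.mem_biUnion.mpr ⟨b, mem_glue.mpr ⟨B, hB, hb⟩, hxb⟩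

lemma glue_filter (hdisj : ∀ l l', l ≠ l' → J l ∩ J l' = ∅)
    (hQ : Q ∈ partitionsOf A) (hp : ∀ B (hB : B ∈ Q), p B hB ∈ partitionsOf (B.biUnion J))
    {B : Finset (Fin mm)} (hB : B ∈ Q) :
    (glue Q p).filter (· ⊆ B.biUnion J) = p B hB := by
  ext b
  rw [Finset.mem_filter]
  constructor
  · rintro ⟨hbg, hbsub⟩
    obtain ⟨B', hB', hb⟩ := mem_glue.mp hbg
    by_cases hBB : B = B'
    · subst hBB; exact hb
    · exfalso
      have hbne : b.Nonempty :=
        Finset.nonempty_iff_ne_empty.mpr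
          (fun h => (mem_partitionsOf.mp (hp B' hB')).1 (h ▸ hb))
      obtain ⟨x, hx⟩ := hbne
      have : x ∈ B.biUnion J ∩ B'.biUnion J :=
        Finset.mem_inter.mpr ⟨hbsub hx, block_subset_of_mem (hp B' hB') hb hx⟩
      rw [cross_disjoint hdisj hQ hB hB' hBB] at this
      exact absurd this (Finset.notMem_empty x)
  · intro hb
    exact ⟨mem_glue.mpr ⟨B, hB, hb⟩, block_subset_of_mem (hp B hB) hb⟩

lemma comp_glue (hJne : ∀ l, (J l).Nonempty) (hdisj : ∀ l l', l ≠ l' → J l ∩ J l' = ∅)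
    (hQ : Q ∈ partitionsOf A) (hp : ∀ B (hB : B ∈ Q), p B hB ∈ connParts J B)
    {B : Finset (Fin mm)} (hB : B ∈ Q) {l : Fin mm} (hl : l ∈ B) :
    comp J (glue Q p) A l = B := by
  have hpp : ∀ B (hB : B ∈ Q), p B hB ∈ partitionsOf (B.biUnion J) :=
    fun B hB => (Finset.mem_filter.mp (hp B hB)).1
  obtain ⟨hQ0, hQd, hQu⟩ := mem_partitionsOf.mp hQ
  have hU := glue_mem_partitionsOf hdisj hQ hpp
  have hUA := blocks_subset hU
  have hBA : B ⊆ A := by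
    rw [← hQu]; exact Finset.subset_biUnion_of_mem id hB
  have hlA : l ∈ A := hBA hl
  -- B is closed with respect to glue Q p
  have hclB : Closed J (glue Q p) B := by
    intro b hb
    obtain ⟨B', hB', hbp⟩ := mem_glue.mp hb
    by_cases hBB : B' = B
    · subst hBB; exact Or.inl (block_subset_of_mem (hpp B' hB') hbp)
    · right
      rw [Finset.eq_empty_iff_forall_notMem]
      intro x hx
      rw [Finset.mem_inter] at hx
      have : x ∈ B'.biUnion J ∩ B.biUnion J :=
        Finset.mem_inter.mpr ⟨block_subset_of_mem (hpp B' hB') hbp hx.1, hx.2⟩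
      rw [cross_disjoint hdisj hQ hB' hB hBB] at this
      exact absurd this (Finset.notMem_empty x)
  have hsub : comp J (glue Q p) A l ⊆ B := comp_min hBA hclB hl
  set D := comp J (glue Q p) A l with hD
  -- blocks of `p B hB` meeting `D.biUnion J` lie inside it
  have hcap : ∀ {x : ℕ}, x ∈ D.biUnion J → ∃ b ∈ p B hB, b ⊆ D.biUnion J ∧ x ∈ b := by
    intro x hx
    have hxB : x ∈ B.biUnion J := by
      obtain ⟨l', hl', hxJ⟩ := Finset.mem_biUnion.mp hx
      exact Finset.mem_biUnion.mpr ⟨l', hsub hl', hxJ⟩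
    rw [← (mem_partitionsOf.mp (hpp B hB)).2.2] at hxB
    obtain ⟨b, hb, hxb⟩ := Finset.mem_biUnion.mp hxB
    have hbU : b ∈ glue Q p := mem_glue.mpr ⟨B, hB, hb⟩
    rcases comp_closed hdisj hUA hlA b hbU with hbsub | hbd
    · exact ⟨b, hb, hbsub, hxb⟩
    · exfalso
      have : x ∈ b ∩ D.biUnion J := Finset.mem_inter.mpr ⟨hxb, hx⟩
      rw [hbd] at this
      exact absurd this (Finset.notMem_empty x)
  set S := (p B hB).filter (· ⊆ D.biUnion J) with hS
  have heq : S.biUnion id = D.biUnion J := by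
    ext x
    constructor
    · intro hx
      obtain ⟨b, hb, hxb⟩ := Finset.mem_biUnion.mp hx
      exact (Finset.mem_filter.mp hb).2 hxb
    · intro hx
      obtain ⟨b, hb, hbsub, hxb⟩ := hcap hx
      exact Finset.mem_biUnion.mpr ⟨b, Finset.mem_filter.mpr ⟨hb, hbsub⟩, hxb⟩
  have hlD : l ∈ D := mem_comp_self hlA
  by_contra hne
  -- contradict connectivity of `p B hB`
  refine (Finset.mem_filter.mp (hp B hB)).2 ⟨S, Finset.mem_powerset.mpr (Finset.filter_subset _ _),
    D, Finset.mem_powerset.mpr hsub, ?_, ?_, ⟨l, hlD⟩, hne, heq⟩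
  · obtain ⟨x, hxJ⟩ := hJne l
    have hx : x ∈ D.biUnion J := Finset.mem_biUnion.mpr ⟨l, hlD, hxJ⟩
    obtain ⟨b, hb, hbsub, hxb⟩ := hcap hx
    exact ⟨b, Finset.mem_filter.mpr ⟨hb, hbsub⟩⟩
  · intro hSP
    apply hne
    have : (p B hB).biUnion id = B.biUnion J := (mem_partitionsOf.mp (hpp B hB)).2.2
    rw [hSP, this] at heq
    exact biUnion_inj hJne hdisj heq.symm

lemma glue_Qof (hJne : ∀ l, (J l).Nonempty) (hdisj : ∀ l l', l ≠ l' → J l ∩ J l' = ∅)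
    (hQ : Q ∈ partitionsOf A) (hp : ∀ B (hB : B ∈ Q), p B hB ∈ connParts J B) :
    Qof J (glue Q p) A = Q := by
  obtain ⟨hQ0, hQd, hQu⟩ := mem_partitionsOf.mp hQ
  ext C
  rw [Qof, Finset.mem_image]
  constructor
  · rintro ⟨l, hlA, rfl⟩
    rw [← hQu] at hlA
    obtain ⟨B, hB, hlB⟩ := Finset.mem_biUnion.mp hlA
    rw [comp_glue hJne hdisj hQ hp hB hlB]
    exact hB
  · intro hC
    have hCne : C.Nonempty := Finset.nonempty_iff_ne_empty.mpr (fun h => hQ0 (h ▸ hC))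
    obtain ⟨l, hl⟩ := hCne
    have hlA : l ∈ A := by
      rw [← hQu]; exact Finset.mem_biUnion.mpr ⟨C, hC, hl⟩
    exact ⟨l, hlA, comp_glue hJne hdisj hQ hp hC hl⟩

lemma unglue (hdisj : ∀ l l', l ≠ l' → J l ∩ J l' = ∅)
    (hP : P ∈ partitionsOf (A.biUnion J)) (hQof : Qof J P A = Q) :
    glue Q (fun B (_ : B ∈ Q) => P.filter (· ⊆ B.biUnion J)) = P := by
  have hPA := blocks_subset hP
  obtain ⟨h0, hd, hu⟩ := mem_partitionsOf.mp hP
  ext b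
  constructor
  · intro hb
    obtain ⟨B, hB, hbf⟩ := mem_glue.mp hb
    exact (Finset.mem_filter.mp hbf).1
  · intro hb
    have hbne : b.Nonempty := Finset.nonempty_iff_ne_empty.mpr (fun h => h0 (h ▸ hb))
    obtain ⟨x, hx⟩ := hbne
    obtain ⟨l, hlA, hxJ⟩ := Finset.mem_biUnion.mp (hPA b hb hx)
    have hcompQ : comp J P A l ∈ Q := by
      rw [← hQof, Qof]
      exact Finset.mem_image.mpr ⟨l, hlA, rfl⟩
    have hbsub : b ⊆ (comp J P A l).biUnion J := by
      rcases comp_closed hdisj hPA hlA b hb with h | h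
      · exact h
      · exfalso
        have : x ∈ b ∩ (comp J P A l).biUnion J :=
          Finset.mem_inter.mpr
            ⟨hx, Finset.mem_biUnion.mpr ⟨l, mem_comp_self hlA, hxJ⟩⟩
        rw [h] at this
        exact absurd this (Finset.notMem_empty x)
    exact mem_glue.mpr ⟨comp J P A l, hcompQ, Finset.mem_filter.mpr ⟨hb, hbsub⟩⟩

lemma innerSum (hJne : ∀ l, (J l).Nonempty) (hdisj : ∀ l l', l ≠ l' → J l ∩ J l' = ∅)
    (T : Finset ℕ → ℝ) (hQ : Q ∈ partitionsOf A) :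
    ∑ P ∈ (partitionsOf (A.biUnion J)).filter (fun P => Qof J P A = Q), ∏ b ∈ P, T b
      = ∏ B ∈ Q, ∑ R ∈ connParts J B, ∏ b ∈ R, T b := by
  rw [Finset.prod_sum]
  refine Finset.sum_nbij' (i := fun P => fun B (hB : B ∈ Q) => P.filter (· ⊆ B.biUnion J))
    (j := fun p => glue Q p) ?_ ?_ ?_ ?_ ?_
  · intro P hP
    obtain ⟨hP, hQof⟩ := Finset.mem_filter.mp hP
    rw [Finset.mem_pi]
    intro B hB
    exact restriction_connected hdisj hP (hQof ▸ hB)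
  · intro p hp
    rw [Finset.mem_pi] at hp
    have hpp : ∀ B (hB : B ∈ Q), p B hB ∈ partitionsOf (B.biUnion J) :=
      fun B hB => (Finset.mem_filter.mp (hp B hB)).1
    exact Finset.mem_filter.mpr
      ⟨glue_mem_partitionsOf hdisj hQ hpp, glue_Qof hJne hdisj hQ hp⟩
  · intro P hP
    obtain ⟨hP, hQof⟩ := Finset.mem_filter.mp hP
    exact unglue hdisj hP hQof
  · intro p hp
    rw [Finset.mem_pi] at hp
    have hpp : ∀ B (hB : B ∈ Q), p B hB ∈ partitionsOf (B.biUnion J) :=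
      fun B hB => (Finset.mem_filter.mp (hp B hB)).1
    funext B hB
    exact glue_filter hdisj hQ hpp hB
  · intro P hP
    obtain ⟨hP, hQof⟩ := Finset.mem_filter.mp hP
    have hPA := blocks_subset hP
    obtain ⟨h0, hd, hu⟩ := mem_partitionsOf.mp hP
    have hdisjoint : (↑Q.attach : Set {x // x ∈ Q}).PairwiseDisjoint
        (fun B : {x // x ∈ Q} => P.filter (· ⊆ B.1.biUnion J)) := by
      intro B1 h1 B2 h2 hne
      have hvne : B1.1 ≠ B2.1 := fun h => hne (Subtype.ext h)
      rw [Function.onFun, Finset.disjoint_left]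
      intro b hb1 hb2
      have hbne : b.Nonempty := Finset.nonempty_iff_ne_empty.mpr
        (fun h => h0 (h ▸ (Finset.mem_filter.mp hb1).1))
      obtain ⟨x, hx⟩ := hbne
      have : x ∈ B1.1.biUnion J ∩ B2.1.biUnion J :=
        Finset.mem_inter.mpr
          ⟨(Finset.mem_filter.mp hb1).2 hx, (Finset.mem_filter.mp hb2).2 hx⟩
      rw [cross_disjoint hdisj hQ B1.2 B2.2 hvne] at this
      exact absurd this (Finset.notMem_empty x)
    have hPeq : P = Q.attach.biUnion (fun B => P.filter (· ⊆ B.1.biUnion J)) :=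
      (unglue hdisj hP hQof).symm
    conv_lhs => rw [hPeq]
    exact Finset.prod_biUnion hdisjoint

lemma recursion (hJne : ∀ l, (J l).Nonempty) (hdisj : ∀ l l', l ≠ l' → J l ∩ J l' = ∅)
    (T : Finset ℕ → ℝ) (A : Finset (Fin mm)) :
    ∑ P ∈ partitionsOf (A.biUnion J), ∏ b ∈ P, T b
      = ∑ Q ∈ partitionsOf A, ∏ B ∈ Q, ∑ R ∈ connParts J B, ∏ b ∈ R, T b := by
  rw [← Finset.sum_fiberwise_of_maps_to (g := fun P => Qof J P A)
    (fun P hP => Qof_mem_partitionsOf hdisj hP) (fun P => ∏ b ∈ P, T b)]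
  exact Finset.sum_congr rfl (fun Q hQ => innerSum hJne hdisj T hQ)

lemma unique {f g : Finset (Fin mm) → ℝ}
    (h : ∀ A : Finset (Fin mm), A.Nonempty →
      ∑ Q ∈ partitionsOf A, ∏ B ∈ Q, f B = ∑ Q ∈ partitionsOf A, ∏ B ∈ Q, g B) :
    ∀ A : Finset (Fin mm), A.Nonempty → f A = g A := by
  intro A
  induction A using Finset.strongInduction with
  | _ A ih =>
  intro hA
  have hmem : ({A} : Finset (Finset (Fin mm))) ∈ partitionsOf A := by
    rw [mem_partitionsOf]
    refine ⟨?_, ?_, ?_⟩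
    · simp only [Finset.mem_singleton]
      exact fun hc => hA.ne_empty hc.symm
    · intro a ha b hb hne
      rw [Finset.mem_singleton] at ha hb
      exact absurd (ha.trans hb.symm) hne
    · simp
  have hrest : ∀ Q ∈ (partitionsOf A).erase {A}, ∏ B ∈ Q, f B = ∏ B ∈ Q, g B := by
    intro Q hQmem
    obtain ⟨hne, hQ⟩ := Finset.mem_erase.mp hQmem
    obtain ⟨h0, hd, hu⟩ := mem_partitionsOf.mp hQ
    refine Finset.prod_congr rfl (fun B hB => ?_)
    have hBA : B ⊆ A := by
      rw [← hu]; exact Finset.subset_biUnion_of_mem id hB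
    have hBne : B.Nonempty := Finset.nonempty_iff_ne_empty.mpr (fun hc => h0 (hc ▸ hB))
    have hBssub : B ⊂ A := by
      refine Finset.ssubset_iff_subset_ne.mpr ⟨hBA, fun hBA' => ?_⟩
      apply hne
      rw [Finset.eq_singleton_iff_unique_mem]
      refine ⟨hBA' ▸ hB, fun B' hB' => ?_⟩
      by_contra hB'ne
      have hd' := hd B' hB' B hB (hBA' ▸ hB'ne)
      have hB'A : B' ⊆ A := by
        rw [← hu]; exact Finset.subset_biUnion_of_mem id hB'
      have : B' = ∅ := by
        rw [← hd']
        exact (Finset.inter_eq_left.mpr (hBA' ▸ hB'A)).symm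
      exact h0 (this ▸ hB')
    exact ih B hBssub hBne
  have h1 := h A hA
  rw [← Finset.sum_erase_add _ _ hmem, ← Finset.sum_erase_add _ _ hmem,
    Finset.sum_congr rfl hrest] at h1
  have := add_left_cancel h1
  simpa using this

end BT

/-- Block truncated moments expand into connected partitions: if `Tb` is the
block truncation of the moments `m` (each block `J l` treated as one object)
and `T` the truncation of `m` on points, then `Tb univ` is the sum over all
partitions of `⋃ l, J l` that are connected with respect to the blocks
`J 1, …, J m` of the products of truncated moments. -/
theorem block_truncation_eq_sum_connected (mm : ℕ) (hmm : 0 < mm)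
    (J : Fin mm → Finset ℕ) (hJne : ∀ l, (J l).Nonempty)
    (hdisj : ∀ l l', l ≠ l' → J l ∩ J l' = ∅)
    (m T : Finset ℕ → ℝ)
    (hT : ∀ S : Finset ℕ, S.Nonempty → m S = ∑ P ∈ partitionsOf S, ∏ b ∈ P, T b)
    (Tb : Finset (Fin mm) → ℝ)
    (hTb : ∀ A : Finset (Fin mm), A.Nonempty →
      m (A.biUnion J) = ∑ Q ∈ partitionsOf A, ∏ B ∈ Q, Tb B) :
    Tb Finset.univ =
      ∑ P ∈ (partitionsOf (Finset.univ.biUnion J)).filter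
          (fun P => ¬ ∃ S ∈ P.powerset, ∃ B ∈ (Finset.univ : Finset (Fin mm)).powerset,
            S.Nonempty ∧ S ≠ P ∧ B.Nonempty ∧ B ≠ Finset.univ ∧
              S.biUnion id = B.biUnion J),
        ∏ b ∈ P, T b := by
  have huniv : (Finset.univ : Finset (Fin mm)).Nonempty :=
    ⟨⟨0, hmm⟩, Finset.mem_univ _⟩
  have key := BT.unique (f := Tb)
    (g := fun A => ∑ R ∈ BT.connParts J A, ∏ b ∈ R, T b) ?_ Finset.univ huniv
  · exact key
  · intro A hA
    have hABne : (A.biUnion J).Nonempty := by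
      obtain ⟨l, hl⟩ := hA
      obtain ⟨x, hx⟩ := hJne l
      exact ⟨x, Finset.mem_biUnion.mpr ⟨l, hl, hx⟩⟩
    rw [← hTb A hA, hT _ hABne, BT.recursion hJne hdisj T A]
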